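/- Let n, m, k be positive integers with k-dimensional representations n = C(a_{k+1},k+1) + C(a_k,k) + ⋯ + C(a_i,i) and m = C(b_{k+1},k+1) + C(b_k,k) + ⋯ + C(b_j,j). Then n < m if and only if either (i > j and a_t = b_t for all t ∈ {i, …, k+1}), or there exists t ∈ {max(i,j), …, k+1} with a_t ≠ b_t and the maximal such index t satisfies a_t < b_t. -/

import Mathlib

/-- `IsKRep k n i a` says that `n = C(a_{k+1}, k+1) + ⋯ + C(a_i, i)` is the
`k`-dimensional representation of `n`, i.e. `a_{k+1} > a_k > ⋯ > a_i ≥ i ≥ 1`. -/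
def IsKRep (k n i : ℕ) (a : ℕ → ℕ) : Prop :=
  1 ≤ i ∧ i ≤ k + 1 ∧ i ≤ a i ∧ (∀ t, i ≤ t → t ≤ k → a t < a (t + 1)) ∧
    n = ∑ t ∈ Finset.Icc i (k + 1), Nat.choose (a t) t

lemma sum_choose_lt_aux {k i : ℕ} {a : ℕ → ℕ} (h1 : 1 ≤ i) (hi : i ≤ a i)
    (hmono : ∀ t, i ≤ t → t ≤ k → a t < a (t + 1)) :
    ∀ s, i ≤ s → s ≤ k + 1 →
      ∑ t ∈ Finset.Icc i s, (a t).choose t < (a s + 1).choose s := by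
  intro s his
  induction s, his using Nat.le_induction with
  | base =>
    intro _
    rw [Finset.Icc_self, Finset.sum_singleton]
    obtain ⟨i', rfl⟩ : ∃ i', i = i' + 1 := ⟨i - 1, by omega⟩
    rw [Nat.choose_succ_succ]
    have : 0 < (a (i' + 1)).choose i' := Nat.choose_pos (by omega)
    simp only [Nat.succ_eq_add_one]
    omega
  | succ s hs ih =>
    intro hsk
    have hle : a s + 1 ≤ a (s + 1) := hmono s hs (by omega)
    rw [Finset.sum_Icc_succ_top (by omega)]
    have h2 := ih (by omega)
    have h3 : (a s + 1).choose s ≤ (a (s + 1)).choose s :=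
      Nat.choose_le_choose s hle
    have h4 : (a (s + 1) + 1).choose (s + 1) =
        (a (s + 1)).choose s + (a (s + 1)).choose (s + 1) :=
      Nat.choose_succ_succ _ _
    omega

lemma key_lt {n m k i j t₀ : ℕ} {a b : ℕ → ℕ}
    (ha : IsKRep k n i a) (hb : IsKRep k m j b)
    (hij : max i j ≤ t₀) (htk : t₀ ≤ k + 1) (hab : a t₀ < b t₀)
    (heq : ∀ t, t₀ < t → t ≤ k + 1 → a t = b t) : n < m := by
  obtain ⟨hi1, hik, hia, hamono, hn⟩ := ha
  obtain ⟨hj1, hjk, hjb, hbmono, hm⟩ := hb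
  have hit : i ≤ t₀ := le_trans (le_max_left _ _) hij
  have hjt : j ≤ t₀ := le_trans (le_max_right _ _) hij
  have hdisj : ∀ (l : ℕ), Disjoint (Finset.Icc l t₀) (Finset.Ioc t₀ (k + 1)) := by
    intro l
    refine Finset.disjoint_left.mpr ?_
    intro x hx hx'
    rw [Finset.mem_Icc] at hx
    rw [Finset.mem_Ioc] at hx'
    omega
  have hsplitA : (Finset.Icc i (k + 1)) = Finset.Icc i t₀ ∪ Finset.Ioc t₀ (k + 1) := by
    ext x
    simp only [Finset.mem_Icc, Finset.mem_union, Finset.mem_Ioc]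
    omega
  have hsplitB : (Finset.Icc j (k + 1)) = Finset.Icc j t₀ ∪ Finset.Ioc t₀ (k + 1) := by
    ext x
    simp only [Finset.mem_Icc, Finset.mem_union, Finset.mem_Ioc]
    omega
  rw [hsplitA, Finset.sum_union (hdisj i)] at hn
  rw [hsplitB, Finset.sum_union (hdisj j)] at hm
  have hEtail : ∑ t ∈ Finset.Ioc t₀ (k + 1), (a t).choose t =
      ∑ t ∈ Finset.Ioc t₀ (k + 1), (b t).choose t := by
    refine Finset.sum_congr rfl fun t ht => ?_
    rw [Finset.mem_Ioc] at ht
    rw [heq t ht.1 ht.2]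
  have hA : ∑ t ∈ Finset.Icc i t₀, (a t).choose t < (a t₀ + 1).choose t₀ :=
    sum_choose_lt_aux hi1 hia hamono t₀ hit htk
  have hAB : (a t₀ + 1).choose t₀ ≤ (b t₀).choose t₀ :=
    Nat.choose_le_choose t₀ hab
  have hB : (b t₀).choose t₀ ≤ ∑ t ∈ Finset.Icc j t₀, (b t).choose t :=
    Finset.single_le_sum (f := fun t => (b t).choose t) (fun t _ => Nat.zero_le _)
      (Finset.mem_Icc.mpr ⟨hjt, le_refl _⟩)
  omega

lemma case1_lt {n m k i j : ℕ} {a b : ℕ → ℕ}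
    (ha : IsKRep k n i a) (hb : IsKRep k m j b) (hji : j < i)
    (heq : ∀ t, i ≤ t → t ≤ k + 1 → a t = b t) : n < m := by
  obtain ⟨hi1, hik, hia, hamono, hn⟩ := ha
  obtain ⟨hj1, hjk, hjb, hbmono, hm⟩ := hb
  have hsplit : (Finset.Icc j (k + 1)) = Finset.Ico j i ∪ Finset.Icc i (k + 1) := by
    ext x
    simp only [Finset.mem_Icc, Finset.mem_union, Finset.mem_Ico]
    omega
  have hdisj : Disjoint (Finset.Ico j i) (Finset.Icc i (k + 1)) := by
    refine Finset.disjoint_left.mpr ?_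
    intro x hx hx'
    rw [Finset.mem_Ico] at hx
    rw [Finset.mem_Icc] at hx'
    omega
  rw [hsplit, Finset.sum_union hdisj] at hm
  have hEtail : ∑ t ∈ Finset.Icc i (k + 1), (a t).choose t =
      ∑ t ∈ Finset.Icc i (k + 1), (b t).choose t := by
    refine Finset.sum_congr rfl fun t ht => ?_
    rw [Finset.mem_Icc] at ht
    rw [heq t ht.1 ht.2]
  have hpos : 0 < (b j).choose j := Nat.choose_pos hjb
  have hB : (b j).choose j ≤ ∑ t ∈ Finset.Ico j i, (b t).choose t :=
    Finset.single_le_sum (f := fun t => (b t).choose t) (fun t _ => Nat.zero_le _)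
      (Finset.mem_Ico.mpr ⟨le_refl _, hji⟩)
  omega

/-- Lemma 2.2(b): given `k`-dimensional representations of `n` and `m`,
`n < m` iff either `i > j` and `a_t = b_t` for all `t ∈ {i, …, k+1}`, or there is
`t ∈ {max i j, …, k+1}` with `a_t ≠ b_t` and the maximal such `t` satisfies
`a_t < b_t` (encoded as: there is `t₀` in that range with `a_{t₀} < b_{t₀}` and
`a_t = b_t` for every `t` in the range above `t₀`). -/
theorem lt_iff_rep_lt (n m k i j : ℕ) (a b : ℕ → ℕ)
    (hn : 1 ≤ n) (hm : 1 ≤ m) (hk : 1 ≤ k)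
    (ha : IsKRep k n i a) (hb : IsKRep k m j b) :
    n < m ↔
      (j < i ∧ ∀ t, i ≤ t → t ≤ k + 1 → a t = b t) ∨
      (∃ t₀, max i j ≤ t₀ ∧ t₀ ≤ k + 1 ∧ a t₀ < b t₀ ∧
        ∀ t, t₀ < t → t ≤ k + 1 → a t = b t) := by
  constructor
  · intro hlt
    by_cases hall : ∀ t, max i j ≤ t → t ≤ k + 1 → a t = b t
    · rcases lt_trichotomy i j with h | h | h
      · exact absurd (case1_lt hb ha h
          (fun t ht htk => (hall t (by omega) htk).symm)) (by omega)
      · exfalso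
        have hnm : n = m := by
          rw [ha.2.2.2.2, hb.2.2.2.2, h]
          refine Finset.sum_congr rfl fun t ht => ?_
          rw [Finset.mem_Icc] at ht
          rw [hall t (by omega) ht.2]
        omega
      · exact Or.inl ⟨h, fun t ht htk => hall t (by omega) htk⟩
    · push_neg at hall
      obtain ⟨t, ht1, ht2, ht3⟩ := hall
      set S := (Finset.Icc (max i j) (k + 1)).filter (fun t => a t ≠ b t) with hS
      have hSne : S.Nonempty :=
        ⟨t, Finset.mem_filter.mpr ⟨Finset.mem_Icc.mpr ⟨ht1, ht2⟩, ht3⟩⟩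
      set t₀ := S.max' hSne with ht₀def
      have ht₀mem : t₀ ∈ S := S.max'_mem hSne
      rw [hS, Finset.mem_filter, Finset.mem_Icc] at ht₀mem
      obtain ⟨⟨hm1, hm2⟩, hne⟩ := ht₀mem
      have hmax : ∀ t, t₀ < t → t ≤ k + 1 → a t = b t := by
        intro t h1 h2
        by_contra hcon
        have htS : t ∈ S :=
          Finset.mem_filter.mpr ⟨Finset.mem_Icc.mpr ⟨by omega, h2⟩, hcon⟩
        have := S.le_max' t htS
        omega
      rcases lt_or_gt_of_ne hne with hlt' | hgt
      · exact Or.inr ⟨t₀, hm1, hm2, hlt', hmax⟩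
      · exact absurd (key_lt hb ha (by omega) hm2 hgt
          (fun t h1 h2 => (hmax t h1 h2).symm)) (by omega)
  · rintro (⟨hji, heq⟩ | ⟨t₀, h1, h2, h3, h4⟩)
    · exact case1_lt ha hb hji heq
    · exact key_lt ha hb h1 h2 h3 h4
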